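/- Let L > 0 and let f : E → ℝ be convex with nonempty minimizer set X* and minimum value f*, and suppose f is L-QG+. Then for every minimizer x* ∈ X*, every x ∈ E and every g ∈ ∂f(x): f* ≥ f(x) + ⟨g, x* − x⟩ + (1/(2L))·‖g‖². -/

import Mathlib

open scoped RealInnerProductSpace

theorem qg_convex_subgradient_inequality
    {E : Type*} [NormedAddCommGroup E] [InnerProductSpace ℝ E] [FiniteDimensional ℝ E]
    (L : ℝ) (hL : 0 < L) (f : E → ℝ) (hconv : ConvexOn ℝ Set.univ f)
    (Xstar : Set E) (hXstar : Xstar = {z | ∀ y, f z ≤ f y}) (hne : Xstar.Nonempty)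
    (fstar : ℝ) (hfstar : ∀ z ∈ Xstar, f z = fstar)
    (hQG : ∀ z, f z - fstar ≤ L / 2 * Metric.infDist z Xstar ^ 2)
    (xstar : E) (hxstar : xstar ∈ Xstar)
    (x g : E) (hsub : ∀ y, f y ≥ f x + ⟪g, y - x⟫) :
    fstar ≥ f x + ⟪g, xstar - x⟫ + 1 / (2 * L) * ‖g‖ ^ 2 := by
  set y : E := xstar + (1 / L) • g with hy
  have h1 : f y ≥ f x + ⟪g, y - x⟫ := hsub y
  have hdist : Metric.infDist y Xstar ≤ ‖g‖ / L := by
    have := Metric.infDist_le_dist_of_mem (x := y) hxstar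
    rw [dist_eq_norm] at this
    have hnorm : ‖y - xstar‖ = ‖g‖ / L := by
      simp [hy, norm_smul, abs_of_pos hL, div_eq_inv_mul]
    linarith [this, hnorm ▸ this]
  have hnn : 0 ≤ Metric.infDist y Xstar := Metric.infDist_nonneg
  have h2 : f y - fstar ≤ L / 2 * (‖g‖ / L) ^ 2 := by
    refine (hQG y).trans ?_
    have : Metric.infDist y Xstar ^ 2 ≤ (‖g‖ / L) ^ 2 := by nlinarith
    nlinarith
  have hinner : ⟪g, y - x⟫ = ⟪g, xstar - x⟫ + (1 / L) * ‖g‖ ^ 2 := by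
    have : y - x = (xstar - x) + (1 / L) • g := by rw [hy]; abel
    rw [this, inner_add_right, real_inner_smul_right, real_inner_self_eq_norm_sq]
  rw [hinner] at h1
  have hL' : L ≠ 0 := ne_of_gt hL
  have hsq : L / 2 * (‖g‖ / L) ^ 2 = ‖g‖ ^ 2 / (2 * L) := by
    field_simp
  rw [hsq] at h2
  have : 1 / (2 * L) * ‖g‖ ^ 2 = ‖g‖ ^ 2 / (2 * L) := by ring
  rw [this]
  have hgL : (1 / L) * ‖g‖ ^ 2 - ‖g‖ ^ 2 / (2 * L) = ‖g‖ ^ 2 / (2 * L) := by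
    field_simp; ring
  linarith
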